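/- Let A = ℂ[x₁₁, x₁₂, x₁₃, x₂₁, x₂₂, x₂₃, x₃₁, x₃₂, x₃₃] and I = ⟨x₃₁, x₃₂, x₃₃, x₁₁ + x₂₂, x₁₂x₂₁ + x₂₂², x₁₂x₂₃ − x₁₃x₂₂⟩. Then the Krull dimension of the quotient ring A/I is 3. Moreover, the Krull dimensions of A/p₁ and A/p₂ are both 3, where p₁ = ⟨x₁₁, x₁₂, x₂₂, x₃₁, x₃₂, x₃₃⟩ and p₂ = ⟨x₃₁, x₃₂, x₃₃, x₁₁+x₂₂, x₁₂x₂₁+x₂₂², x₁₂x₂₃−x₁₃x₂₂, x₁₃x₂₁+x₂₂x₂₃⟩. -/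

import Mathlib

open MvPolynomial Set Submodule

set_option linter.unusedSectionVars false
set_option maxHeartbeats 1600000

namespace KD3

/-! ### Part 1: a counting bound — no `n+1` algebraically independent elements in a domain
whose elements become polynomial in `n` chosen elements after clearing denominators. -/

variable (K : Type*) {D : Type*} [Field K] [CommRing D] [IsDomain D] [Algebra K D]
variable {n : ℕ}

def P (e : Fin n → D) (m : ℕ) : Submodule K D :=
  Submodule.span K {x | ∃ β : Fin n → ℕ, (∀ i, β i ≤ m) ∧ x = ∏ i, e i ^ β i}

variable {K}

lemma P_mono {e : Fin n → D} {m m' : ℕ} (h : m ≤ m') : P K e m ≤ P K e m' := by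
  apply Submodule.span_mono
  rintro x ⟨β, hβ, rfl⟩
  exact ⟨β, fun i => (hβ i).trans h, rfl⟩

lemma one_mem_P (e : Fin n → D) (m : ℕ) : (1 : D) ∈ P K e m :=
  Submodule.subset_span ⟨fun _ => 0, fun _ => Nat.zero_le _, by simp⟩

lemma mul_mem_P {e : Fin n → D} {m m' : ℕ} {x y : D} (hx : x ∈ P K e m)
    (hy : y ∈ P K e m') : x * y ∈ P K e (m + m') := by
  have h := Submodule.mul_mem_mul hx hy
  rw [P, P, Submodule.span_mul_span] at h
  refine Submodule.span_le.mpr ?_ h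
  rintro z ⟨a, ⟨β, hβ, rfl⟩, b, ⟨γ, hγ, rfl⟩, rfl⟩
  refine Submodule.subset_span ⟨fun i => β i + γ i,
    fun i => Nat.add_le_add (hβ i) (hγ i), ?_⟩
  show (∏ i, e i ^ β i) * (∏ i, e i ^ γ i) = _
  rw [← Finset.prod_mul_distrib]
  exact Finset.prod_congr rfl fun i _ => (pow_add _ _ _).symm

lemma pow_mem_P {e : Fin n → D} {m : ℕ} {x : D} (hx : x ∈ P K e m) (k : ℕ) :
    x ^ k ∈ P K e (k * m) := by
  induction k with
  | zero => simpa using one_mem_P e 0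
  | succ k ih =>
    have := mul_mem_P ih hx
    rw [← pow_succ] at this
    have he : k * m + m = (k + 1) * m := by ring
    rwa [he] at this

lemma prod_mem_P {ι : Type*} {e : Fin n → D} (s : Finset ι) (F : ι → D) (m : ι → ℕ)
    (h : ∀ j ∈ s, F j ∈ P K e (m j)) : (∏ j ∈ s, F j) ∈ P K e (∑ j ∈ s, m j) := by
  classical
  induction s using Finset.induction with
  | empty => simpa using one_mem_P e 0
  | @insert a s' hj ih =>
    rw [Finset.prod_insert hj, Finset.sum_insert hj]
    exact mul_mem_P (h a (Finset.mem_insert_self _ _))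
      (ih fun j hjs => h j (Finset.mem_insert_of_mem hjs))

lemma exists_mem_P {e : Fin n → D} {x : D} (hx : x ∈ Algebra.adjoin K (Set.range e)) :
    ∃ m, x ∈ P K e m := by
  induction hx using Algebra.adjoin_induction with
  | mem a ha =>
    obtain ⟨i, rfl⟩ := ha
    refine ⟨1, Submodule.subset_span ⟨fun j => if j = i then 1 else 0,
      by intro j; dsimp only; split <;> simp, ?_⟩⟩
    simp [Finset.prod_ite_eq']
  | algebraMap r =>
    exact ⟨0, by simpa [Algebra.algebraMap_eq_smul_one] using
      Submodule.smul_mem _ r (one_mem_P e 0)⟩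
  | add a b _ _ iha ihb =>
    obtain ⟨m₁, h₁⟩ := iha
    obtain ⟨m₂, h₂⟩ := ihb
    exact ⟨max m₁ m₂, Submodule.add_mem _ (P_mono (le_max_left _ _) h₁)
      (P_mono (le_max_right _ _) h₂)⟩
  | mul a b _ _ iha ihb =>
    obtain ⟨m₁, h₁⟩ := iha
    obtain ⟨m₂, h₂⟩ := ihb
    exact ⟨m₁ + m₂, mul_mem_P h₁ h₂⟩

theorem not_algebraicIndependent (e : Fin n → D) (q : D) (hq : q ≠ 0)
    (hqE : q ∈ Algebra.adjoin K (Set.range e))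
    (z : Fin (n + 1) → D) (hz : ∀ j, z j * q ∈ Algebra.adjoin K (Set.range e)) :
    ¬ AlgebraicIndependent K z := by
  classical
  intro hind
  obtain ⟨c₀, hc₀⟩ := exists_mem_P (K := K) hqE
  choose cz hcz using fun j => exists_mem_P (K := K) (hz j)
  set c : ℕ := max c₀ (Finset.univ.sup cz) with hcdef
  have hqP : q ∈ P K e c := P_mono (le_max_left _ _) hc₀
  have hzP : ∀ j, z j * q ∈ P K e c := fun j =>
    P_mono ((Finset.le_sup (Finset.mem_univ j)).trans (le_max_right _ _)) (hcz j)
  set d : ℕ := ((n + 1) * c + 1) ^ n with hddef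
  have hd1 : 1 ≤ d := Nat.one_le_pow _ _ (Nat.succ_pos _)
  set M : ℕ := (n + 1) * d with hMdef
  set v : (Fin (n + 1) → Fin (d + 1)) → D :=
    fun α => (∏ j, z j ^ (α j : ℕ)) * q ^ M with hv
  have hLI : LinearIndependent K v := by
    have hb : LinearIndependent K
        (fun s : (Fin (n + 1)) →₀ ℕ => (monomial s (1 : K) : MvPolynomial (Fin (n + 1)) K)) := by
      have := (MvPolynomial.basisMonomials (Fin (n + 1)) K).linearIndependent
      rwa [coe_basisMonomials] at this
    have hinj : Function.Injective (fun α : Fin (n + 1) → Fin (d + 1) =>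
        (Finsupp.equivFunOnFinite.symm (fun j => (α j : ℕ)))) := by
      intro a b hab
      have h2 := Finsupp.equivFunOnFinite.symm.injective hab
      funext j
      exact Fin.ext (congrFun h2 j)
    have h1 := hb.comp _ hinj
    have h2 := h1.map' (aeval z).toLinearMap
      (LinearMap.ker_eq_bot.mpr (algebraicIndependent_iff_injective_aeval.mp hind))
    have h3 := h2.map' (LinearMap.mulRight K (q ^ M))
      (LinearMap.ker_eq_bot.mpr (mul_left_injective₀ (pow_ne_zero _ hq)))
    convert h3 using 1
    funext α
    simp only [hv, Function.comp_apply, LinearMap.mulRight_apply, AlgHom.toLinearMap_apply]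
    congr 1
    rw [aeval_monomial]
    rw [Finsupp.prod_fintype _ _ (fun i => pow_zero _)]
    simp [Finsupp.equivFunOnFinite]
    rfl
    rfl
  have hsum : ∀ α : Fin (n + 1) → Fin (d + 1), (∑ j, (α j : ℕ)) ≤ M := by
    intro α
    calc (∑ j, (α j : ℕ)) ≤ ∑ _j : Fin (n + 1), d :=
          Finset.sum_le_sum fun j _ => Nat.lt_succ_iff.mp (α j).isLt
      _ = (n + 1) * d := by simp [Finset.sum_const, mul_comm]
  have hvP : ∀ α, v α ∈ P K e (M * c) := by
    intro α
    have hrw : v α = (∏ j, (z j * q) ^ (α j : ℕ)) * q ^ (M - ∑ j, (α j : ℕ)) := by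
      simp only [hv, mul_pow, Finset.prod_mul_distrib, Finset.prod_pow_eq_pow_sum]
      rw [mul_assoc, ← pow_add, Nat.add_sub_cancel' (hsum α)]
    rw [hrw]
    have h1 : (∏ j, (z j * q) ^ (α j : ℕ)) ∈ P K e (∑ j, (α j : ℕ) * c) :=
      prod_mem_P Finset.univ _ _ fun j _ => pow_mem_P (hzP j) _
    have h2 := pow_mem_P hqP (M - ∑ j, (α j : ℕ))
    have h3 := mul_mem_P h1 h2
    have harith : (∑ j, (α j : ℕ) * c) + (M - ∑ j, (α j : ℕ)) * c = M * c := by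
      rw [← Finset.sum_mul, ← Nat.add_mul, Nat.add_sub_cancel' (hsum α)]
    rwa [harith] at h3
  set w : Finset D :=
    Finset.image (fun β : Fin n → Fin (M * c + 1) => ∏ i, e i ^ (β i : ℕ)) Finset.univ with hwdef
  have hspan : Set.range v ≤ (Submodule.span K (w : Set D) : Set D) := by
    rintro _ ⟨α, rfl⟩
    refine Submodule.span_le.mpr ?_ (hvP α)
    rintro x ⟨β, hβ, rfl⟩
    exact Submodule.subset_span (Finset.mem_coe.mpr (Finset.mem_image.mpr
      ⟨fun i => ⟨β i, Nat.lt_succ_of_le (hβ i)⟩, Finset.mem_univ _, rfl⟩))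
  have hcard := linearIndependent_le_span' v hLI (w : Set D) hspan
  rw [Cardinal.mk_fintype, Nat.cast_le] at hcard
  have hcard2 : Fintype.card (Fin (n + 1) → Fin (d + 1)) = (d + 1) ^ (n + 1) := by simp
  have hcard3 : Fintype.card (w : Set D) ≤ (M * c + 1) ^ n := by
    have hc : Fintype.card (w : Set D) = w.card := by
      simp only [Finset.coe_sort_coe, Fintype.card_coe]
    rw [hc]
    calc w.card ≤ Fintype.card (Fin n → Fin (M * c + 1)) := Finset.card_image_le.trans (by simp)
      _ = (M * c + 1) ^ n := by simp
  have hineq : (d + 1) ^ (n + 1) ≤ (M * c + 1) ^ n := hcard2 ▸ hcard.trans hcard3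
  have h5 : M * c + 1 ≤ d * ((n + 1) * c + 1) := by
    have : M * c = d * ((n + 1) * c) := by rw [hMdef]; ring
    rw [this]; nlinarith [hd1]
  have h6 : (M * c + 1) ^ n ≤ d ^ n * d := by
    calc (M * c + 1) ^ n ≤ (d * ((n + 1) * c + 1)) ^ n := Nat.pow_le_pow_left h5 n
      _ = d ^ n * ((n + 1) * c + 1) ^ n := mul_pow _ _ _
      _ = d ^ n * d := by rw [hddef]
  have h7 : d ^ n * d = d ^ (n + 1) := (pow_succ d n).symm
  have h8 : d ^ (n + 1) < (d + 1) ^ (n + 1) :=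
    Nat.pow_lt_pow_left (Nat.lt_succ_self d) (Nat.succ_ne_zero n)
  omega

end KD3

namespace KD3

/-! ### Part 2: chains of primes produce algebraically independent families. -/

variable {K A : Type*} [Field K] [CommRing A] [Algebra K A]

lemma aeval_cons_eq {R : Type*} [CommRing R] [Algebra K R] {k : ℕ} (y : R) (s : Fin k → R)
    (P : MvPolynomial (Fin (k + 1)) K) :
    aeval (Fin.cons y s : Fin (k + 1) → R) P =
      Polynomial.eval₂ (aeval s : MvPolynomial (Fin k) K →ₐ[K] R).toRingHom y
        (finSuccEquiv K k P) := by
  have h : (Polynomial.eval₂RingHom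
      (aeval s : MvPolynomial (Fin k) K →ₐ[K] R).toRingHom y).comp
      (finSuccEquiv K k).toAlgHom.toRingHom
      = ((aeval (Fin.cons y s : Fin (k + 1) → R)).toRingHom) := by
    apply MvPolynomial.ringHom_ext
    · intro r
      simp only [RingHom.coe_comp, Function.comp_apply, RingHom.coe_coe,
        AlgEquiv.toAlgHom_eq_coe, AlgHom.toRingHom_eq_coe, AlgHom.coe_coe,
        Polynomial.coe_eval₂RingHom]
      have h2 : (finSuccEquiv K k) (C r) = Polynomial.C (C r) := by
        simp [finSuccEquiv_apply]
      change Polynomial.eval₂ _ y (finSuccEquiv K k (C r)) = _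
      rw [h2]
      simp
    · intro i
      simp only [RingHom.coe_comp, Function.comp_apply, RingHom.coe_coe,
        AlgEquiv.toAlgHom_eq_coe, AlgHom.toRingHom_eq_coe, AlgHom.coe_coe,
        Polynomial.coe_eval₂RingHom]
      refine Fin.cases ?_ ?_ i
      · change Polynomial.eval₂ _ y (finSuccEquiv K k (X 0)) = _
        rw [finSuccEquiv_X_zero]
        simp
      · intro j
        change Polynomial.eval₂ _ y (finSuccEquiv K k (X j.succ)) = _
        rw [finSuccEquiv_X_succ]
        simp
  have := DFunLike.congr_fun h P
  simpa using this.symm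

theorem drop {q q' : Ideal A} (hq : q.IsPrime) (hq' : q'.IsPrime) (hle : q ≤ q')
    {k : ℕ} {z : Fin k → A}
    (hz : AlgebraicIndependent K (Ideal.Quotient.mk q' ∘ z))
    {f : A} (hfq' : f ∈ q') (hfq : f ∉ q) :
    AlgebraicIndependent K (Ideal.Quotient.mk q ∘ Fin.cons f z) := by
  haveI := hq
  haveI := hq'
  rw [algebraicIndependent_iff]
  intro P hP
  rw [Fin.comp_cons] at hP
  rw [aeval_cons_eq] at hP
  set g : MvPolynomial (Fin k) K →+* A ⧸ q :=
    (aeval ((Ideal.Quotient.mk q) ∘ z) : MvPolynomial (Fin k) K →ₐ[K] A ⧸ q).toRingHom with hg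
  set π : A ⧸ q →+* A ⧸ q' := Ideal.Quotient.factor hle with hπ
  have hπg : ∀ p : MvPolynomial (Fin k) K, π (g p) =
      (aeval ((Ideal.Quotient.mk q') ∘ z) : MvPolynomial (Fin k) K →ₐ[K] A ⧸ q') p := by
    intro p
    have hcomp : π.comp g = (aeval ((Ideal.Quotient.mk q') ∘ z) :
        MvPolynomial (Fin k) K →ₐ[K] A ⧸ q').toRingHom := by
      apply MvPolynomial.ringHom_ext
      · intro r
        show π (g (C r)) = (aeval ((Ideal.Quotient.mk q') ∘ z)) (C r)
        rw [hg]
        show π ((aeval ((Ideal.Quotient.mk q) ∘ z)) (C r)) = _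
        rw [aeval_C, aeval_C]
        rw [IsScalarTower.algebraMap_apply K A (A ⧸ q) r,
          IsScalarTower.algebraMap_apply K A (A ⧸ q') r]
        exact Ideal.Quotient.factor_mk hle _
      · intro i
        show π (g (X i)) = (aeval ((Ideal.Quotient.mk q') ∘ z)) (X i)
        rw [hg]
        show π ((aeval ((Ideal.Quotient.mk q) ∘ z)) (X i)) = _
        rw [aeval_X, aeval_X]
        exact Ideal.Quotient.factor_mk hle _
    have := DFunLike.congr_fun hcomp p
    simpa using this
  have hπf : π (Ideal.Quotient.mk q f) = 0 := by
    rw [hπ, Ideal.Quotient.factor_mk, Ideal.Quotient.eq_zero_iff_mem]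
    exact hfq'
  have hf0 : (Ideal.Quotient.mk q f) ≠ 0 := by
    rw [Ne, Ideal.Quotient.eq_zero_iff_mem]; exact hfq
  have key : ∀ (N : ℕ) (Q : Polynomial (MvPolynomial (Fin k) K)), Q.natDegree ≤ N →
      Polynomial.eval₂ g (Ideal.Quotient.mk q f) Q = 0 → Q = 0 := by
    intro N
    induction N with
    | zero =>
      intro Q hdeg hev
      have hQ : Q = Polynomial.C (Q.coeff 0) := Polynomial.eq_C_of_natDegree_le_zero hdeg
      rw [hQ, Polynomial.eval₂_C] at hev
      have : π (g (Q.coeff 0)) = 0 := by rw [hev, map_zero]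
      rw [hπg] at this
      have h0 : Q.coeff 0 = 0 := (algebraicIndependent_iff.mp hz) _ this
      rw [hQ, h0, map_zero]
    | succ N ih =>
      intro Q hdeg hev
      have hc0 : Q.coeff 0 = 0 := by
        have h1 : π (Polynomial.eval₂ g (Ideal.Quotient.mk q f) Q) = 0 := by
          rw [hev, map_zero]
        rw [Polynomial.hom_eval₂, hπf, Polynomial.eval₂_at_zero] at h1
        have h2 : π (g (Q.coeff 0)) = 0 := h1
        rw [hπg] at h2
        exact (algebraicIndependent_iff.mp hz) _ h2
      obtain ⟨Q', rfl⟩ := Polynomial.X_dvd_iff.mpr hc0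
      rw [Polynomial.eval₂_mul, Polynomial.eval₂_X] at hev
      have hQ'0 : Polynomial.eval₂ g (Ideal.Quotient.mk q f) Q' = 0 := by
        rcases mul_eq_zero.mp hev with h | h
        · exact absurd h hf0
        · exact h
      by_cases hQ' : Q' = 0
      · rw [hQ', mul_zero]
      · have hdeg' : Q'.natDegree ≤ N := by
          have := Polynomial.natDegree_mul (Polynomial.X_ne_zero (R := MvPolynomial (Fin k) K)) hQ'
          rw [Polynomial.natDegree_X] at this
          omega
        rw [ih Q' hdeg' hQ'0, mul_zero]
  have hQ0 := key _ _ le_rfl hP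
  have : P = 0 := by
    have := congrArg (finSuccEquiv K k).symm hQ0
    simpa using this
  exact this

theorem chain_algIndep : ∀ (m : ℕ) (q : Fin (m + 1) → Ideal A), (∀ i, (q i).IsPrime) →
    StrictMono q → ∃ z : Fin m → A, AlgebraicIndependent K (Ideal.Quotient.mk (q 0) ∘ z) := by
  intro m
  induction m with
  | zero =>
    intro q hq _
    haveI := hq 0
    exact ⟨Fin.elim0, algebraicIndependent_empty_type⟩
  | succ m ih =>
    intro q hq hmono
    obtain ⟨z, hz⟩ := ih (q ∘ Fin.succ) (fun i => hq _) (hmono.comp Fin.strictMono_succ)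
    have h01 : q 0 < q (Fin.succ 0) := hmono (by simp [Fin.pos_iff_ne_zero])
    obtain ⟨f, hf1, hf0⟩ := SetLike.exists_of_lt h01
    refine ⟨Fin.cons f z, ?_⟩
    exact drop (hq 0) (hq (Fin.succ 0)) h01.le hz hf1 hf0

theorem dim_le_three (I0 : Ideal A)
    (h : ∀ q : Ideal A, q.IsPrime → I0 ≤ q →
      ∀ z : Fin 4 → A, ¬ AlgebraicIndependent K (Ideal.Quotient.mk q ∘ z)) :
    ringKrullDim (A ⧸ I0) ≤ 3 := by
  show (⨆ (p : LTSeries (PrimeSpectrum (A ⧸ I0))), (p.length : WithBot (WithTop ℕ))) ≤ 3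
  apply iSup_le
  intro p
  have hlen : p.length ≤ 3 := by
    by_contra hlt
    push_neg at hlt
    have h4 : 4 ≤ p.length := hlt
    set Q : Fin (p.length + 1) → Ideal A :=
      fun i => Ideal.comap (Ideal.Quotient.mk I0) ((p.toFun i).asIdeal) with hQ
    have hQp : ∀ i, (Q i).IsPrime := fun i => by
      haveI := (p.toFun i).isPrime
      exact Ideal.IsPrime.comap _
    have hQmono : StrictMono Q := by
      intro i j hij
      have h1 : (p.toFun i).asIdeal < (p.toFun j).asIdeal :=
        (PrimeSpectrum.asIdeal_lt_asIdeal _ _).mpr (p.strictMono hij)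
      refine lt_of_le_of_ne (Ideal.comap_mono h1.le) ?_
      intro heq
      exact h1.ne (Ideal.comap_injective_of_surjective _ Ideal.Quotient.mk_surjective heq)
    have hI0 : I0 ≤ Q 0 := by
      intro x hx
      show Ideal.Quotient.mk I0 x ∈ (p.toFun 0).asIdeal
      rw [Ideal.Quotient.eq_zero_iff_mem.mpr hx]
      exact zero_mem _
    obtain ⟨z, hz⟩ := chain_algIndep (K := K) p.length Q hQp hQmono
    have hz4 : AlgebraicIndependent K ((Ideal.Quotient.mk (Q 0) ∘ z) ∘ Fin.castLE h4) :=
      hz.comp _ (Fin.castLE_injective h4)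
    exact h (Q 0) (hQp 0) hI0 (z ∘ Fin.castLE h4) hz4
  exact_mod_cast hlen

end KD3

namespace KD3

/-! ### Part 3: lower bound from an explicit chain of primes. -/

theorem three_le_dim {A : Type*} [CommRing A] (I0 : Ideal A) (k : Fin 4 → Ideal A)
    (hp : ∀ i, (k i).IsPrime) (hmono : StrictMono k) (hI0 : I0 ≤ k 0) :
    3 ≤ ringKrullDim (A ⧸ I0) := by
  have hIle : ∀ i, I0 ≤ k i := fun i => hI0.trans (hmono.monotone (Fin.zero_le i))
  have hker : ∀ i, RingHom.ker (Ideal.Quotient.mk I0) ≤ k i := fun i => by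
    rw [Ideal.mk_ker]; exact hIle i
  set J : Fin 4 → Ideal (A ⧸ I0) := fun i => (k i).map (Ideal.Quotient.mk I0) with hJ
  have hJp : ∀ i, (J i).IsPrime := fun i => by
    haveI := hp i
    exact Ideal.map_isPrime_of_surjective Ideal.Quotient.mk_surjective (hker i)
  have hcomap : ∀ i, (J i).comap (Ideal.Quotient.mk I0) = k i := fun i => by
    rw [hJ, Ideal.comap_map_of_surjective _ Ideal.Quotient.mk_surjective,
      ← RingHom.ker_eq_comap_bot, Ideal.mk_ker, sup_eq_left]
    exact hIle i
  have hJmono : StrictMono J := by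
    intro i j hij
    refine lt_of_le_of_ne (Ideal.map_mono (hmono hij).le) ?_
    intro heq
    have := congrArg (Ideal.comap (Ideal.Quotient.mk I0)) heq
    rw [hcomap i, hcomap j] at this
    exact (hmono hij).ne this
  let s : LTSeries (PrimeSpectrum (A ⧸ I0)) :=
    ⟨3, fun i => ⟨J i, hJp i⟩, fun i => by
      exact (PrimeSpectrum.asIdeal_lt_asIdeal _ _).mp (hJmono (Fin.castSucc_lt_succ : Fin.castSucc i < i.succ))⟩
  have := Order.LTSeries.length_le_krullDim s
  exact_mod_cast this

end KD3

namespace KD3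

/-! ### Part 4: the concrete rings. -/

abbrev A9 := MvPolynomial (Fin 3 × Fin 3) ℂ
abbrev C3 := MvPolynomial (Fin 3) ℂ

lemma exists_clear {K D : Type*} [Field K] [CommRing D] [IsDomain D] [Algebra K D]
    {E : Subalgebra K D} {u : D} (hu : u ∈ E) {ι : Type*} (g : ι → D)
    (htop : Algebra.adjoin K (Set.range g) = ⊤) (hgE : ∀ i, ∃ N, g i * u ^ N ∈ E)
    (x : D) : ∃ N, x * u ^ N ∈ E := by
  have hx : x ∈ Algebra.adjoin K (Set.range g) := htop.symm ▸ Algebra.mem_top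
  induction hx using Algebra.adjoin_induction with
  | mem a ha => obtain ⟨i, rfl⟩ := ha; exact hgE i
  | algebraMap r => exact ⟨0, by simpa using E.algebraMap_mem r⟩
  | add a b _ _ iha ihb =>
    obtain ⟨N₁, h₁⟩ := iha; obtain ⟨N₂, h₂⟩ := ihb
    refine ⟨max N₁ N₂, ?_⟩
    have e1 : a * u ^ max N₁ N₂ = a * u ^ N₁ * u ^ (max N₁ N₂ - N₁) := by
      rw [mul_assoc, ← pow_add, Nat.add_sub_cancel' (le_max_left _ _)]
    have e2 : b * u ^ max N₁ N₂ = b * u ^ N₂ * u ^ (max N₁ N₂ - N₂) := by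
      rw [mul_assoc, ← pow_add, Nat.add_sub_cancel' (le_max_right _ _)]
    rw [add_mul, e1, e2]
    exact add_mem (mul_mem h₁ (pow_mem hu _)) (mul_mem h₂ (pow_mem hu _))
  | mul a b _ _ iha ihb =>
    obtain ⟨N₁, h₁⟩ := iha; obtain ⟨N₂, h₂⟩ := ihb
    refine ⟨N₁ + N₂, ?_⟩
    have e3 : a * b * u ^ (N₁ + N₂) = a * u ^ N₁ * (b * u ^ N₂) := by rw [pow_add]; ring
    rw [e3]; exact mul_mem h₁ h₂

lemma adjoin_mk_top {K : Type*} [Field K] {σ : Type*} (q : Ideal (MvPolynomial σ K)) :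
    Algebra.adjoin K (Set.range fun p => Ideal.Quotient.mk q (X p)) = ⊤ := by
  have h1 : (Set.range fun p : σ => Ideal.Quotient.mk q (X p))
      = (Ideal.Quotient.mkₐ K q) '' (Set.range X) := by
    rw [← Set.range_comp]
    rfl
  rw [h1, ← AlgHom.map_adjoin, MvPolynomial.adjoin_range_X, Algebra.map_top]
  rw [AlgHom.range_eq_top]
  exact Ideal.Quotient.mkₐ_surjective K q

lemma no_four_I {q : Ideal A9} (hq : q.IsPrime)
    (h31 : X (2,0) ∈ q) (h32 : X (2,1) ∈ q) (h33 : X (2,2) ∈ q)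
    (h11 : X (0,0) + X (1,1) ∈ q)
    (hr2 : X (0,1) * X (1,0) + X (1,1) ^ 2 ∈ q)
    (hr3 : X (0,1) * X (1,2) - X (0,2) * X (1,1) ∈ q)
    (z : Fin 4 → A9) :
    ¬ AlgebraicIndependent ℂ (Ideal.Quotient.mk q ∘ z) := by
  set mkq := Ideal.Quotient.mk q with hmkq
  set g : Fin 3 × Fin 3 → A9 ⧸ q := fun p => mkq (X p) with hgdef
  have htop := adjoin_mk_top (K := ℂ) q
  have e11 : g (0,0) = - g (1,1) := by
    have h := Ideal.Quotient.eq_zero_iff_mem.mpr h11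
    rw [map_add] at h
    exact eq_neg_of_add_eq_zero_left h
  have er2 : g (0,1) * g (1,0) = - g (1,1) ^ 2 := by
    have h := Ideal.Quotient.eq_zero_iff_mem.mpr hr2
    rw [map_add, map_mul, map_pow] at h
    exact eq_neg_of_add_eq_zero_left h
  have er3 : g (0,1) * g (1,2) = g (0,2) * g (1,1) := by
    have h := Ideal.Quotient.eq_zero_iff_mem.mpr hr3
    rw [map_sub, map_mul, map_mul] at h
    exact sub_eq_zero.mp h
  have h20 : g (2,0) = 0 := Ideal.Quotient.eq_zero_iff_mem.mpr h31
  have h21 : g (2,1) = 0 := Ideal.Quotient.eq_zero_iff_mem.mpr h32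
  have h22 : g (2,2) = 0 := Ideal.Quotient.eq_zero_iff_mem.mpr h33
  by_cases hu : g (0,1) = 0
  · have hs : g (1,1) = 0 := by
      have h2 : g (1,1) ^ 2 = 0 := by
        rw [← neg_eq_zero, ← er2, hu, zero_mul]
      exact pow_eq_zero_iff two_ne_zero |>.mp h2
    set e : Fin 3 → A9 ⧸ q := ![g (0,2), g (1,0), g (1,2)] with hedef
    set E := Algebra.adjoin ℂ (Set.range e) with hEdef
    have hv : g (0,2) ∈ E := Algebra.subset_adjoin ⟨0, rfl⟩
    have hw : g (1,0) ∈ E := Algebra.subset_adjoin ⟨1, rfl⟩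
    have ht : g (1,2) ∈ E := Algebra.subset_adjoin ⟨2, rfl⟩
    have hgE : ∀ p : Fin 3 × Fin 3, g p ∈ E := by
      intro p
      fin_cases p
      · rw [show ((⟨0,by norm_num⟩ : Fin 3), (⟨0, by norm_num⟩ : Fin 3)) = ((0 : Fin 3),(0 : Fin 3)) from rfl, e11, hs, neg_zero]; exact zero_mem E
      · rw [show ((⟨0,by norm_num⟩ : Fin 3), (⟨1, by norm_num⟩ : Fin 3)) = ((0 : Fin 3),(1 : Fin 3)) from rfl, hu]; exact zero_mem E
      · exact hv
      · exact hw
      · rw [show ((⟨1,by norm_num⟩ : Fin 3), (⟨1, by norm_num⟩ : Fin 3)) = ((1 : Fin 3),(1 : Fin 3)) from rfl, hs]; exact zero_mem E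
      · exact ht
      · rw [show ((⟨2,by norm_num⟩ : Fin 3), (⟨0, by norm_num⟩ : Fin 3)) = ((2 : Fin 3),(0 : Fin 3)) from rfl, h20]; exact zero_mem E
      · rw [show ((⟨2,by norm_num⟩ : Fin 3), (⟨1, by norm_num⟩ : Fin 3)) = ((2 : Fin 3),(1 : Fin 3)) from rfl, h21]; exact zero_mem E
      · rw [show ((⟨2,by norm_num⟩ : Fin 3), (⟨2, by norm_num⟩ : Fin 3)) = ((2 : Fin 3),(2 : Fin 3)) from rfl, h22]; exact zero_mem E
    have hall : ∀ x : A9 ⧸ q, x ∈ E := by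
      intro x
      have hle : Algebra.adjoin ℂ (Set.range g) ≤ E :=
        Algebra.adjoin_le (by rintro _ ⟨p, rfl⟩; exact hgE p)
      exact hle (htop.symm ▸ Algebra.mem_top)
    exact not_algebraicIndependent e 1 one_ne_zero (one_mem E) _
      (fun j => by rw [mul_one]; exact hall _)
  · set e : Fin 3 → A9 ⧸ q := ![g (0,1), g (0,2), g (1,1)] with hedef
    set E := Algebra.adjoin ℂ (Set.range e) with hEdef
    have hue : g (0,1) ∈ E := Algebra.subset_adjoin ⟨0, rfl⟩
    have hv : g (0,2) ∈ E := Algebra.subset_adjoin ⟨1, rfl⟩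
    have hs : g (1,1) ∈ E := Algebra.subset_adjoin ⟨2, rfl⟩
    have hgE : ∀ p : Fin 3 × Fin 3, ∃ N, g p * g (0,1) ^ N ∈ E := by
      intro p
      fin_cases p
      · exact ⟨0, by rw [pow_zero, mul_one,
          show ((⟨0,by norm_num⟩ : Fin 3), (⟨0, by norm_num⟩ : Fin 3)) = ((0 : Fin 3),(0 : Fin 3)) from rfl, e11]; exact neg_mem hs⟩
      · exact ⟨0, by rw [pow_zero, mul_one]; exact hue⟩
      · exact ⟨0, by rw [pow_zero, mul_one]; exact hv⟩
      · exact ⟨1, by rw [pow_one, mul_comm,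
          show ((⟨1,by norm_num⟩ : Fin 3), (⟨0, by norm_num⟩ : Fin 3)) = ((1 : Fin 3),(0 : Fin 3)) from rfl, er2]; exact neg_mem (pow_mem hs 2)⟩
      · exact ⟨0, by rw [pow_zero, mul_one]; exact hs⟩
      · exact ⟨1, by rw [pow_one, mul_comm,
          show ((⟨1,by norm_num⟩ : Fin 3), (⟨2, by norm_num⟩ : Fin 3)) = ((1 : Fin 3),(2 : Fin 3)) from rfl, er3]; exact mul_mem hv hs⟩
      · exact ⟨0, by rw [pow_zero, mul_one,
          show ((⟨2,by norm_num⟩ : Fin 3), (⟨0, by norm_num⟩ : Fin 3)) = ((2 : Fin 3),(0 : Fin 3)) from rfl, h20]; exact zero_mem E⟩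
      · exact ⟨0, by rw [pow_zero, mul_one,
          show ((⟨2,by norm_num⟩ : Fin 3), (⟨1, by norm_num⟩ : Fin 3)) = ((2 : Fin 3),(1 : Fin 3)) from rfl, h21]; exact zero_mem E⟩
      · exact ⟨0, by rw [pow_zero, mul_one,
          show ((⟨2,by norm_num⟩ : Fin 3), (⟨2, by norm_num⟩ : Fin 3)) = ((2 : Fin 3),(2 : Fin 3)) from rfl, h22]; exact zero_mem E⟩
    have hclear := exists_clear hue g htop hgE
    choose N hN using fun j => hclear (mkq (z j))
    set M := Finset.univ.sup N with hM
    refine not_algebraicIndependent e (g (0,1) ^ M) (pow_ne_zero _ hu) (pow_mem hue M) _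
      (fun j => ?_)
    have hj : N j ≤ M := Finset.le_sup (Finset.mem_univ j)
    have hrw : mkq (z j) * g (0,1) ^ M = mkq (z j) * g (0,1) ^ (N j) * g (0,1) ^ (M - N j) := by
      rw [mul_assoc, ← pow_add, Nat.add_sub_cancel' hj]
    show mkq (z j) * g (0,1) ^ M ∈ E
    rw [hrw]
    exact mul_mem (hN j) (pow_mem hue _)

lemma no_four_p1 {q : Ideal A9} (hq : q.IsPrime)
    (h00 : X (0,0) ∈ q) (h01 : X (0,1) ∈ q) (h11 : X (1,1) ∈ q)
    (h20 : X (2,0) ∈ q) (h21 : X (2,1) ∈ q) (h22 : X (2,2) ∈ q)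
    (z : Fin 4 → A9) :
    ¬ AlgebraicIndependent ℂ (Ideal.Quotient.mk q ∘ z) := by
  set mkq := Ideal.Quotient.mk q with hmkq
  set g : Fin 3 × Fin 3 → A9 ⧸ q := fun p => mkq (X p) with hgdef
  have htop := adjoin_mk_top (K := ℂ) q
  have z00 : g (0,0) = 0 := Ideal.Quotient.eq_zero_iff_mem.mpr h00
  have z01 : g (0,1) = 0 := Ideal.Quotient.eq_zero_iff_mem.mpr h01
  have z11 : g (1,1) = 0 := Ideal.Quotient.eq_zero_iff_mem.mpr h11
  have z20 : g (2,0) = 0 := Ideal.Quotient.eq_zero_iff_mem.mpr h20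
  have z21 : g (2,1) = 0 := Ideal.Quotient.eq_zero_iff_mem.mpr h21
  have z22 : g (2,2) = 0 := Ideal.Quotient.eq_zero_iff_mem.mpr h22
  set e : Fin 3 → A9 ⧸ q := ![g (0,2), g (1,0), g (1,2)] with hedef
  set E := Algebra.adjoin ℂ (Set.range e) with hEdef
  have hv : g (0,2) ∈ E := Algebra.subset_adjoin ⟨0, rfl⟩
  have hw : g (1,0) ∈ E := Algebra.subset_adjoin ⟨1, rfl⟩
  have ht : g (1,2) ∈ E := Algebra.subset_adjoin ⟨2, rfl⟩
  have hgE : ∀ p : Fin 3 × Fin 3, g p ∈ E := by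
    intro p
    fin_cases p
    · rw [show ((⟨0,by norm_num⟩ : Fin 3), (⟨0, by norm_num⟩ : Fin 3)) = ((0 : Fin 3),(0 : Fin 3)) from rfl, z00]; exact zero_mem E
    · rw [show ((⟨0,by norm_num⟩ : Fin 3), (⟨1, by norm_num⟩ : Fin 3)) = ((0 : Fin 3),(1 : Fin 3)) from rfl, z01]; exact zero_mem E
    · exact hv
    · exact hw
    · rw [show ((⟨1,by norm_num⟩ : Fin 3), (⟨1, by norm_num⟩ : Fin 3)) = ((1 : Fin 3),(1 : Fin 3)) from rfl, z11]; exact zero_mem E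
    · exact ht
    · rw [show ((⟨2,by norm_num⟩ : Fin 3), (⟨0, by norm_num⟩ : Fin 3)) = ((2 : Fin 3),(0 : Fin 3)) from rfl, z20]; exact zero_mem E
    · rw [show ((⟨2,by norm_num⟩ : Fin 3), (⟨1, by norm_num⟩ : Fin 3)) = ((2 : Fin 3),(1 : Fin 3)) from rfl, z21]; exact zero_mem E
    · rw [show ((⟨2,by norm_num⟩ : Fin 3), (⟨2, by norm_num⟩ : Fin 3)) = ((2 : Fin 3),(2 : Fin 3)) from rfl, z22]; exact zero_mem E
  have hall : ∀ x : A9 ⧸ q, x ∈ E := by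
    intro x
    have hle : Algebra.adjoin ℂ (Set.range g) ≤ E :=
      Algebra.adjoin_le (by rintro _ ⟨p, rfl⟩; exact hgE p)
    exact hle (htop.symm ▸ Algebra.mem_top)
  exact not_algebraicIndependent e 1 one_ne_zero (one_mem E) _
    (fun j => by rw [mul_one]; exact hall _)

end KD3
namespace KD3


noncomputable def φ3 : A9 →ₐ[ℂ] C3 :=
  aeval fun p => ![![X 0 * X 1, X 1 * X 1, X 1 * X 2],
                   ![-(X 0 * X 0), -(X 0 * X 1), -(X 0 * X 2)],
                   ![0, 0, 0]] p.1 p.2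

noncomputable def φ2 : A9 →ₐ[ℂ] C3 :=
  aeval fun p => ![![X 0 * X 1, X 1 * X 1, 0],
                   ![-(X 0 * X 0), -(X 0 * X 1), 0],
                   ![0, 0, 0]] p.1 p.2

noncomputable def φ1 : A9 →ₐ[ℂ] C3 :=
  aeval fun p => ![![0, X 1 * X 1, 0], ![0, 0, 0], ![0, 0, 0]] p.1 p.2

noncomputable def φ0 : A9 →ₐ[ℂ] C3 :=
  aeval fun p => ![![0, 0, 0], ![0, 0, 0], ![0, 0, 0]] p.1 p.2

lemma φ2_eq : φ2 = (aeval ![X 0, X 1, 0] : C3 →ₐ[ℂ] C3).comp φ3 := by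
  apply MvPolynomial.algHom_ext
  rintro ⟨i, j⟩
  fin_cases i <;> fin_cases j <;>
    simp [φ2, φ3, Matrix.cons_val_zero, Matrix.cons_val_one, Matrix.head_cons, Matrix.vecHead, Matrix.vecTail]

lemma φ1_eq : φ1 = (aeval ![0, X 1, X 2] : C3 →ₐ[ℂ] C3).comp φ2 := by
  apply MvPolynomial.algHom_ext
  rintro ⟨i, j⟩
  fin_cases i <;> fin_cases j <;>
    simp [φ1, φ2, Matrix.cons_val_zero, Matrix.cons_val_one, Matrix.head_cons, Matrix.vecHead, Matrix.vecTail]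

lemma φ0_eq : φ0 = (aeval ![X 0, 0, X 2] : C3 →ₐ[ℂ] C3).comp φ1 := by
  apply MvPolynomial.algHom_ext
  rintro ⟨i, j⟩
  fin_cases i <;> fin_cases j <;>
    simp [φ0, φ1, Matrix.cons_val_zero, Matrix.cons_val_one, Matrix.head_cons, Matrix.vecHead, Matrix.vecTail]

end KD3

namespace KD3

noncomputable def ψ3 : A9 →ₐ[ℂ] C3 :=
  aeval fun p => ![![0, 0, X 1], ![X 0, 0, X 2], ![0, 0, 0]] p.1 p.2

noncomputable def ψ2 : A9 →ₐ[ℂ] C3 :=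
  aeval fun p => ![![0, 0, X 1], ![X 0, 0, 0], ![0, 0, 0]] p.1 p.2

noncomputable def ψ1 : A9 →ₐ[ℂ] C3 :=
  aeval fun p => ![![0, 0, 0], ![X 0, 0, 0], ![0, 0, 0]] p.1 p.2

lemma ψ2_eq : ψ2 = (aeval ![X 0, X 1, 0] : C3 →ₐ[ℂ] C3).comp ψ3 := by
  apply MvPolynomial.algHom_ext
  rintro ⟨i, j⟩
  fin_cases i <;> fin_cases j <;>
    simp [ψ2, ψ3, Matrix.cons_val_zero, Matrix.cons_val_one, Matrix.head_cons, Matrix.vecHead,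
      Matrix.vecTail]

lemma ψ1_eq : ψ1 = (aeval ![X 0, 0, X 2] : C3 →ₐ[ℂ] C3).comp ψ2 := by
  apply MvPolynomial.algHom_ext
  rintro ⟨i, j⟩
  fin_cases i <;> fin_cases j <;>
    simp [ψ1, ψ2, Matrix.cons_val_zero, Matrix.cons_val_one, Matrix.head_cons, Matrix.vecHead,
      Matrix.vecTail]

lemma ψ0_eq : φ0 = (aeval ![0, X 1, X 2] : C3 →ₐ[ℂ] C3).comp ψ1 := by
  apply MvPolynomial.algHom_ext
  rintro ⟨i, j⟩
  fin_cases i <;> fin_cases j <;>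
    simp [φ0, ψ1, Matrix.cons_val_zero, Matrix.cons_val_one, Matrix.head_cons, Matrix.vecHead,
      Matrix.vecTail]

lemma ker_lt {f g : A9 →ₐ[ℂ] C3} (σ : C3 →ₐ[ℂ] C3) (h : g = σ.comp f) (x : A9)
    (hgx : g x = 0) (hfx : f x ≠ 0) : RingHom.ker f < RingHom.ker g := by
  refine lt_of_le_of_ne ?_ ?_
  · intro y hy
    rw [RingHom.mem_ker] at hy ⊢
    rw [h, AlgHom.comp_apply, hy, map_zero]
  · intro heq
    have hx : x ∈ RingHom.ker g := RingHom.mem_ker.mpr hgx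
    rw [← heq, RingHom.mem_ker] at hx
    exact hfx hx

lemma chainI_strict :
    StrictMono (![RingHom.ker φ3, RingHom.ker φ2, RingHom.ker φ1, RingHom.ker φ0] :
      Fin 4 → Ideal A9) := by
  rw [Fin.strictMono_iff_lt_succ]
  intro i
  fin_cases i
  · show RingHom.ker φ3 < RingHom.ker φ2
    refine ker_lt _ φ2_eq (X (0,2)) ?_ ?_
    · simp [φ2, Matrix.cons_val_zero, Matrix.cons_val_one, Matrix.head_cons]
    · have : φ3 (X (0,2)) = X 1 * X 2 := by
        simp [φ3, Matrix.cons_val_zero, Matrix.cons_val_one, Matrix.head_cons]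
      rw [this]
      exact mul_ne_zero (X_ne_zero _) (X_ne_zero _)
  · show RingHom.ker φ2 < RingHom.ker φ1
    refine ker_lt _ φ1_eq (X (0,0)) ?_ ?_
    · simp [φ1, Matrix.cons_val_zero, Matrix.cons_val_one, Matrix.head_cons]
    · have : φ2 (X (0,0)) = X 0 * X 1 := by
        simp [φ2, Matrix.cons_val_zero, Matrix.cons_val_one, Matrix.head_cons]
      rw [this]
      exact mul_ne_zero (X_ne_zero _) (X_ne_zero _)
  · show RingHom.ker φ1 < RingHom.ker φ0
    refine ker_lt _ φ0_eq (X (0,1)) ?_ ?_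
    · simp [φ0, Matrix.cons_val_zero, Matrix.cons_val_one, Matrix.head_cons]
    · have : φ1 (X (0,1)) = X 1 * X 1 := by
        simp [φ1, Matrix.cons_val_zero, Matrix.cons_val_one, Matrix.head_cons]
      rw [this]
      exact mul_ne_zero (X_ne_zero _) (X_ne_zero _)

lemma chainP1_strict :
    StrictMono (![RingHom.ker ψ3, RingHom.ker ψ2, RingHom.ker ψ1, RingHom.ker φ0] :
      Fin 4 → Ideal A9) := by
  rw [Fin.strictMono_iff_lt_succ]
  intro i
  fin_cases i
  · show RingHom.ker ψ3 < RingHom.ker ψ2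
    refine ker_lt _ ψ2_eq (X (1,2)) ?_ ?_
    · simp [ψ2, Matrix.cons_val_zero, Matrix.cons_val_one, Matrix.head_cons, Matrix.vecHead,
        Matrix.vecTail]
    · have : ψ3 (X (1,2)) = X 2 := by
        simp [ψ3, Matrix.cons_val_zero, Matrix.cons_val_one, Matrix.head_cons, Matrix.vecHead,
          Matrix.vecTail]
      rw [this]
      exact X_ne_zero _
  · show RingHom.ker ψ2 < RingHom.ker ψ1
    refine ker_lt _ ψ1_eq (X (0,2)) ?_ ?_
    · simp [ψ1, Matrix.cons_val_zero, Matrix.cons_val_one, Matrix.head_cons, Matrix.vecHead,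
        Matrix.vecTail]
    · have : ψ2 (X (0,2)) = X 1 := by
        simp [ψ2, Matrix.cons_val_zero, Matrix.cons_val_one, Matrix.head_cons, Matrix.vecHead,
          Matrix.vecTail]
      rw [this]
      exact X_ne_zero _
  · show RingHom.ker ψ1 < RingHom.ker φ0
    refine ker_lt _ ψ0_eq (X (1,0)) ?_ ?_
    · simp [φ0, Matrix.cons_val_zero, Matrix.cons_val_one, Matrix.head_cons, Matrix.vecHead,
        Matrix.vecTail]
    · have : ψ1 (X (1,0)) = X 0 := by
        simp [ψ1, Matrix.cons_val_zero, Matrix.cons_val_one, Matrix.head_cons, Matrix.vecHead,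
          Matrix.vecTail]
      rw [this]
      exact X_ne_zero _

lemma I_le_ker3 :
    Ideal.span {(X (2,0) : A9), X (2,1), X (2,2), X (0,0) + X (1,1),
      X (0,1) * X (1,0) + X (1,1) ^ 2, X (0,1) * X (1,2) - X (0,2) * X (1,1)} ≤
      RingHom.ker φ3 := by
  rw [Ideal.span_le]
  rintro x hx
  simp only [Set.mem_insert_iff, Set.mem_singleton_iff] at hx
  rw [SetLike.mem_coe, RingHom.mem_ker]
  rcases hx with rfl|rfl|rfl|rfl|rfl|rfl <;>
    · simp [φ3, Matrix.cons_val_zero, Matrix.cons_val_one, Matrix.head_cons, Matrix.vecHead,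
        Matrix.vecTail]
      try ring

lemma p2_le_ker3 :
    Ideal.span {(X (2,0) : A9), X (2,1), X (2,2), X (0,0) + X (1,1),
      X (0,1) * X (1,0) + X (1,1) ^ 2, X (0,1) * X (1,2) - X (0,2) * X (1,1),
      X (0,2) * X (1,0) + X (1,1) * X (1,2)} ≤ RingHom.ker φ3 := by
  rw [Ideal.span_le]
  rintro x hx
  simp only [Set.mem_insert_iff, Set.mem_singleton_iff] at hx
  rw [SetLike.mem_coe, RingHom.mem_ker]
  rcases hx with rfl|rfl|rfl|rfl|rfl|rfl|rfl <;>
    · simp [φ3, Matrix.cons_val_zero, Matrix.cons_val_one, Matrix.head_cons, Matrix.vecHead,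
        Matrix.vecTail]
      try ring

lemma p1_le_ker3 :
    Ideal.span {(X (0,0) : A9), X (0,1), X (1,1), X (2,0), X (2,1), X (2,2)} ≤
      RingHom.ker ψ3 := by
  rw [Ideal.span_le]
  rintro x hx
  simp only [Set.mem_insert_iff, Set.mem_singleton_iff] at hx
  rw [SetLike.mem_coe, RingHom.mem_ker]
  rcases hx with rfl|rfl|rfl|rfl|rfl|rfl <;>
    · simp [ψ3, Matrix.cons_val_zero, Matrix.cons_val_one, Matrix.head_cons, Matrix.vecHead,
        Matrix.vecTail]
      try ring

end KD3


namespace KD3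

lemma prime_ker (f : A9 →ₐ[ℂ] C3) : (RingHom.ker f).IsPrime := RingHom.ker_isPrime f

theorem main_I :
    ringKrullDim (A9 ⧸
      (Ideal.span {(X (2, 0) : A9), X (2, 1), X (2, 2),
        X (0, 0) + X (1, 1),
        X (0, 1) * X (1, 0) + X (1, 1) ^ 2,
        X (0, 1) * X (1, 2) - X (0, 2) * X (1, 1)})) = 3 := by
  apply le_antisymm
  · apply dim_le_three (K := ℂ)
    intro q hq hle z
    refine no_four_I hq ?_ ?_ ?_ ?_ ?_ ?_ z <;>
      exact hle (Ideal.subset_span (by simp))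
  · refine three_le_dim _ ![RingHom.ker φ3, RingHom.ker φ2, RingHom.ker φ1, RingHom.ker φ0]
      ?_ chainI_strict ?_
    · intro i
      fin_cases i <;> exact prime_ker _
    · exact I_le_ker3

theorem main_p1 :
    ringKrullDim (A9 ⧸
      (Ideal.span {(X (0, 0) : A9), X (0, 1), X (1, 1), X (2, 0), X (2, 1), X (2, 2)})) = 3 := by
  apply le_antisymm
  · apply dim_le_three (K := ℂ)
    intro q hq hle z
    refine no_four_p1 hq ?_ ?_ ?_ ?_ ?_ ?_ z <;>
      exact hle (Ideal.subset_span (by simp))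
  · refine three_le_dim _ ![RingHom.ker ψ3, RingHom.ker ψ2, RingHom.ker ψ1, RingHom.ker φ0]
      ?_ chainP1_strict ?_
    · intro i
      fin_cases i <;> exact prime_ker _
    · exact p1_le_ker3

theorem main_p2 :
    ringKrullDim (A9 ⧸
      (Ideal.span {(X (2, 0) : A9), X (2, 1), X (2, 2),
        X (0, 0) + X (1, 1),
        X (0, 1) * X (1, 0) + X (1, 1) ^ 2,
        X (0, 1) * X (1, 2) - X (0, 2) * X (1, 1),
        X (0, 2) * X (1, 0) + X (1, 1) * X (1, 2)})) = 3 := by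
  apply le_antisymm
  · apply dim_le_three (K := ℂ)
    intro q hq hle z
    refine no_four_I hq ?_ ?_ ?_ ?_ ?_ ?_ z <;>
      exact hle (Ideal.subset_span (by simp))
  · refine three_le_dim _ ![RingHom.ker φ3, RingHom.ker φ2, RingHom.ker φ1, RingHom.ker φ0]
      ?_ chainI_strict ?_
    · intro i
      fin_cases i <;> exact prime_ker _
    · exact p2_le_ker3

end KD3

open MvPolynomial

/-- In `A = ℂ[x₁₁, …, x₃₃]` (variable `xᵢⱼ` is `X (i-1, j-1)`), the
quotients of `A` by `I`, `p₁`, and `p₂` all have Krull dimension 3. -/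
theorem krull_dimension_three :
    ringKrullDim (MvPolynomial (Fin 3 × Fin 3) ℂ ⧸
      (Ideal.span {(X (2, 0) : MvPolynomial (Fin 3 × Fin 3) ℂ), X (2, 1), X (2, 2),
        X (0, 0) + X (1, 1),
        X (0, 1) * X (1, 0) + X (1, 1) ^ 2,
        X (0, 1) * X (1, 2) - X (0, 2) * X (1, 1)})) = 3 ∧
    ringKrullDim (MvPolynomial (Fin 3 × Fin 3) ℂ ⧸
      (Ideal.span {(X (0, 0) : MvPolynomial (Fin 3 × Fin 3) ℂ), X (0, 1), X (1, 1),
        X (2, 0), X (2, 1), X (2, 2)})) = 3 ∧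
    ringKrullDim (MvPolynomial (Fin 3 × Fin 3) ℂ ⧸
      (Ideal.span {(X (2, 0) : MvPolynomial (Fin 3 × Fin 3) ℂ), X (2, 1), X (2, 2),
        X (0, 0) + X (1, 1),
        X (0, 1) * X (1, 0) + X (1, 1) ^ 2,
        X (0, 1) * X (1, 2) - X (0, 2) * X (1, 1),
        X (0, 2) * X (1, 0) + X (1, 1) * X (1, 2)})) = 3 :=
  ⟨KD3.main_I, KD3.main_p1, KD3.main_p2⟩
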